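/- Every spanning s-t walk in G_r uses all but at most one of the 2r − 2 unit-cost arcs {u_{i+1}u_i : 1 ≤ i < r} ∪ {v_{i+1}v_i : 1 ≤ i < r}, and hence has total cost at least 2r − 1. -/

import Mathlib

open Finset

variable {V : Type*} [Fintype V] [DecidableEq V]

/-- Total `x`-weight of arcs from `A` to `B`. -/
def flowBtw (x : V → V → ℝ) (A B : Finset V) : ℝ := ∑ u ∈ A, ∑ v ∈ B, x u v

/-- `x(∂⁺(U))`: weight of arcs leaving `U`. -/
def cutOut (x : V → V → ℝ) (U : Finset V) : ℝ := flowBtw x U Uᶜ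

/-- `x(∂⁻(U))`: weight of arcs entering `U`. -/
def cutIn (x : V → V → ℝ) (U : Finset V) : ℝ := flowBtw x Uᶜ U

/-- Feasibility for the ATSPP subtour elimination LP on the complete digraph on `V`. -/
structure FeasLP (s t : V) (x : V → V → ℝ) : Prop where
  nonneg : ∀ u v, 0 ≤ x u v
  diag : ∀ v, x v v = 0
  outS : ∑ v, x s v = 1
  inS : ∑ v, x v s = 0
  inT : ∑ v, x v t = 1
  outT : ∑ v, x t v = 0
  outDeg : ∀ v, v ≠ s → v ≠ t → ∑ w, x v w = 1
  inDeg : ∀ v, v ≠ s → v ≠ t → ∑ w, x w v = 1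
  cut : ∀ U : Finset V, s ∈ U → U ≠ Finset.univ → 1 ≤ cutOut x U

/-- Vertices of the gap instance `G_r`: `s`, `t`, `u₀,…,u_{r-1}`, `v₀,…,v_{r-1}`
(`u i` stands for `u_{i+1}` in 1-based paper notation). -/
inductive GapV (r : ℕ) where
  | s | t | u (i : Fin r) | v (i : Fin r)
  deriving DecidableEq, Fintype

/-- The arcs of `G_r`. -/
def isArc {r : ℕ} : GapV r → GapV r → Bool
  | .s, .u i => i.val = 0
  | .s, .v i => i.val = 0
  | .u i, .t => i.val = r - 1
  | .v i, .t => i.val = r - 1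
  | .u i, .v j => i.val = 0 && j.val = r - 1
  | .v i, .u j => i.val = 0 && j.val = r - 1
  | .u i, .u j => j.val + 1 = i.val || i.val + 1 = j.val
  | .v i, .v j => j.val + 1 = i.val || i.val + 1 = j.val
  | _, _ => false

/-- Arc costs in `G_r`: the arcs `s u₁`, `s v₁`, `u_r t`, `v_r t`, `u_{i+1} u_i`,
`v_{i+1} v_i` cost 1; all other arcs cost 0. -/
noncomputable def gapCost {r : ℕ} : GapV r → GapV r → ℝ
  | .s, .u _ => 1
  | .s, .v _ => 1
  | .u _, .t => 1
  | .v _, .t => 1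
  | .u i, .u j => if j.val + 1 = i.val then 1 else 0
  | .v i, .v j => if j.val + 1 = i.val then 1 else 0
  | _, _ => 0

/-- The half-integral LP solution: `1/2` on every arc of `G_r`, `0` elsewhere. -/
noncomputable def gapX (r : ℕ) : GapV r → GapV r → ℝ := fun a b => if isArc a b then 1/2 else 0

/-- A list of vertices is a walk in `G_r` iff consecutive entries are arcs. -/
def IsWalkList {r : ℕ} (w : List (GapV r)) : Prop :=
  List.Chain' (fun a b => isArc a b = true) w

/-- The walk `w` uses the arc `(a, b)`. -/
def usesArc {r : ℕ} (w : List (GapV r)) (a b : GapV r) : Prop :=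
  ∃ n : ℕ, w[n]? = some a ∧ w[n + 1]? = some b

/-- The cost of a walk: sum of arc costs over consecutive pairs. -/
noncomputable def walkCost {r : ℕ} (w : List (GapV r)) : ℝ :=
  ((w.zip w.tail).map fun p => gapCost p.1 p.2).sum

/-- `node true i = u i`, `node false i = v i`. -/
def node {r : ℕ} (c : Bool) (i : Fin r) : GapV r := if c then GapV.u i else GapV.v i

namespace Aux
variable {r : ℕ}

lemma node_ne_s (c : Bool) (j : Fin r) : node c j ≠ GapV.s := by cases c <;> simp [node]
lemma node_ne_t (c : Bool) (j : Fin r) : node c j ≠ GapV.t := by cases c <;> simp [node]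
lemma node_inj {c c' : Bool} {j j' : Fin r} (h : node c j = node c' j') : c = c' ∧ j = j' := by
  cases c <;> cases c' <;> simp_all [node]
lemma no_arc_to_s (a : GapV r) : isArc a GapV.s = false := by cases a <;> rfl
lemma no_arc_from_t (b : GapV r) : isArc GapV.t b = false := by cases b <;> rfl

lemma arc_from_node {c : Bool} {j : Fin r} {b : GapV r} (h : isArc (node c j) b = true) :
    (∃ k : Fin r, b = node c k ∧ (k.val + 1 = j.val ∨ j.val + 1 = k.val)) ∨
    (b = GapV.t ∧ j.val = r - 1) ∨
    (∃ k : Fin r, b = node (!c) k ∧ j.val = 0 ∧ k.val = r - 1) := by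
  cases c <;> cases b <;> simp_all [node, isArc] <;> tauto

lemma arc_to_node {a : GapV r} {c : Bool} {k : Fin r} (h : isArc a (node c k) = true) :
    (a = GapV.s ∧ k.val = 0) ∨
    (∃ j : Fin r, a = node c j ∧ (k.val + 1 = j.val ∨ j.val + 1 = k.val)) ∨
    (∃ j : Fin r, a = node (!c) j ∧ j.val = 0 ∧ k.val = r - 1) := by
  cases c <;> cases a <;> simp_all [node, isArc] <;> tauto

lemma cost_nonneg (a b : GapV r) : 0 ≤ gapCost a b := by
  cases a <;> cases b <;> simp [gapCost] <;> positivity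

lemma cost_from_s {b : GapV r} (h : isArc GapV.s b = true) : gapCost GapV.s b = 1 := by
  cases b <;> simp_all [isArc, gapCost]
lemma cost_to_t {a : GapV r} (h : isArc a GapV.t = true) : gapCost a GapV.t = 1 := by
  cases a <;> simp_all [isArc, gapCost]
lemma cost_back (c : Bool) (i : ℕ) (h : i + 1 < r) :
    gapCost (node c ⟨i+1, h⟩) (node c ⟨i, by omega⟩) = 1 := by
  cases c <;> simp [node, gapCost]


variable {w : List (GapV r)}

lemma step (hw : IsWalkList w) {n : ℕ} (h : n + 1 < w.length) :
    isArc (w[n]'(by omega)) (w[n+1]'h) = true := by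
  have := List.isChain_iff_getElem.mp hw n (by omega)
  simpa using this

lemma t_only_last (hw : IsWalkList w) {n : ℕ} (h : n + 1 < w.length) :
    w[n]'(by omega) ≠ GapV.t := by
  intro he
  have := step hw h
  rw [he, no_arc_from_t] at this
  exact absurd this (by simp)

lemma s_only_first (hw : IsWalkList w) {n : ℕ} (hn : n < w.length)
    (hs : w[n]'hn = GapV.s) : n = 0 := by
  by_contra hne
  obtain ⟨m, rfl⟩ : ∃ m, n = m + 1 := ⟨n - 1, by omega⟩
  have := step hw hn
  rw [hs, no_arc_to_s] at this
  exact absurd this (by simp)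

lemma walk_forward (hw : IsWalkList w) (P : GapV r → Prop)
    (hstep : ∀ n (h : n + 1 < w.length), P (w[n]'(by omega)) →
      P (w[n+1]'h) ∨ w[n+1]'h = GapV.t) :
    ∀ p m (hpm : p ≤ m) (hm : m < w.length), P (w[p]'(by omega)) →
      P (w[m]'hm) ∨ w[m]'hm = GapV.t := by
  intro p m hpm
  induction m, hpm using Nat.le_induction with
  | base => intro hm hP; exact Or.inl hP
  | succ m hpm ih =>
    intro hm hP
    rcases ih (by omega) hP with h | h
    · exact hstep m hm h
    · exact absurd h (t_only_last hw hm)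

lemma walk_backward (hw : IsWalkList w) (P : GapV r → Prop)
    (hstep : ∀ n (h : n + 1 < w.length), P (w[n+1]'h) →
      P (w[n]'(by omega)) ∨ w[n]'(by omega) = GapV.s) :
    ∀ m (hm : m < w.length), P (w[m]'hm) →
      ∀ k (hk1 : 1 ≤ k) (hkm : k ≤ m), P (w[k]'(by omega)) := by
  intro m
  induction m with
  | zero => intro _ _ k hk1 hk0; omega
  | succ m ih =>
    intro hm hP k hk1 hkm
    rcases Nat.eq_or_lt_of_le hkm with h | h
    · subst h; exact hP
    · rcases hstep m hm hP with h2 | h2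
      · exact ih (by omega) h2 k hk1 (by omega)
      · have := s_only_first hw (by omega : m < w.length) h2
        omega

lemma walk_never (hw : IsWalkList w) (P : GapV r → Prop) (hlen : 0 < w.length)
    (h0 : ¬ P (w[0]'hlen))
    (hstep : ∀ n (h : n + 1 < w.length), ¬ P (w[n]'(by omega)) → ¬ P (w[n+1]'h)) :
    ∀ m (hm : m < w.length), ¬ P (w[m]'hm) := by
  intro m
  induction m with
  | zero => intro _; exact h0
  | succ m ih => intro hm; exact hstep m hm (ih (by omega))


lemma mk_uses {a b : GapV r} (n : ℕ) (h : n + 1 < w.length)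
    (ha : w[n]'(by omega) = a) (hb : w[n+1]'h = b) : usesArc w a b :=
  ⟨n, List.getElem?_eq_some_iff.mpr ⟨by omega, ha⟩, List.getElem?_eq_some_iff.mpr ⟨h, hb⟩⟩

lemma uses_spec {a b : GapV r} (h : usesArc w a b) :
    ∃ n, ∃ hn : n + 1 < w.length, w[n]'(by omega) = a ∧ w[n+1]'hn = b := by
  obtain ⟨n, h1, h2⟩ := h
  obtain ⟨hn1, ha⟩ := List.getElem?_eq_some_iff.mp h1
  obtain ⟨hn2, hb⟩ := List.getElem?_eq_some_iff.mp h2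
  exact ⟨n, hn2, ha, hb⟩

lemma high_closure (hw : IsWalkList w) {c : Bool} {i : ℕ} (hi : i + 1 < r)
    (hmiss : ¬ usesArc w (node c ⟨i+1, hi⟩) (node c ⟨i, by omega⟩)) :
    ∀ n (h : n + 1 < w.length),
      (∃ k : Fin r, w[n]'(by omega) = node c k ∧ i < k.val) →
      (∃ k : Fin r, w[n+1]'h = node c k ∧ i < k.val) ∨ w[n+1]'h = GapV.t := by
  rintro n h ⟨k, hk, hik⟩
  have harc := step hw h
  rw [hk] at harc
  rcases arc_from_node harc with ⟨k', hb, hadj⟩ | ⟨hb, _⟩ | ⟨k', hb, hj0, _⟩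
  · rcases hadj with h1 | h1
    · by_cases h2 : i < k'.val
      · exact Or.inl ⟨k', hb, h2⟩
      · exfalso
        apply hmiss
        have hki : k = ⟨i+1, hi⟩ := Fin.ext (by simp; omega)
        have hk'i : k' = (⟨i, by omega⟩ : Fin r) := Fin.ext (by simp; omega)
        exact mk_uses n h (by rw [hk, hki]) (by rw [hb, hk'i])
    · exact Or.inl ⟨k', hb, by omega⟩
  · exact Or.inr hb
  · exfalso; omega

lemma low_backward (hw : IsWalkList w) {c : Bool} {i : ℕ} (hi : i + 1 < r)
    (hmiss : ¬ usesArc w (node c ⟨i+1, hi⟩) (node c ⟨i, by omega⟩)) :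
    ∀ n (h : n + 1 < w.length),
      (∃ k : Fin r, w[n+1]'h = node c k ∧ k.val ≤ i) →
      (∃ k : Fin r, w[n]'(by omega) = node c k ∧ k.val ≤ i) ∨ w[n]'(by omega) = GapV.s := by
  rintro n h ⟨k, hk, hik⟩
  have harc := step hw h
  rw [hk] at harc
  rcases arc_to_node harc with ⟨ha, _⟩ | ⟨j, ha, hadj⟩ | ⟨j, ha, hj0, hkr⟩
  · exact Or.inr ha
  · rcases hadj with h1 | h1
    · by_cases h2 : j.val ≤ i
      · exact Or.inl ⟨j, ha, h2⟩
      · exfalso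
        apply hmiss
        have hji : j = ⟨i+1, hi⟩ := Fin.ext (by simp; omega)
        have hki : k = (⟨i, by omega⟩ : Fin r) := Fin.ext (by simp; omega)
        exact mk_uses n h (by rw [ha, hji]) (by rw [hk, hki])
    · exact Or.inl ⟨j, ha, by omega⟩
  · exfalso; omega

lemma forward_unused (hw : IsWalkList w) (hlen : 0 < w.length)
    (h0 : w[0]'hlen = GapV.s) (hspan : ∀ a : GapV r, a ∈ w)
    {c : Bool} {i : ℕ} (hi : i + 1 < r)
    (hmiss : ¬ usesArc w (node c ⟨i+1, hi⟩) (node c ⟨i, by omega⟩)) :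
    ¬ usesArc w (node c ⟨i, by omega⟩) (node c ⟨i+1, hi⟩) := by
  intro huse
  obtain ⟨p, hp, hpa, hpb⟩ := uses_spec huse
  obtain ⟨m, hm, hxm⟩ := List.mem_iff_getElem.mp (hspan (node (!c) ⟨r-1, by omega⟩))
  rcases Nat.lt_or_ge m 1 with h1 | h1
  · have hm0 : m = 0 := by omega
    subst hm0
    have : node (!c) (⟨r-1, by omega⟩ : Fin r) = GapV.s := by rw [← hxm]; exact h0
    exact node_ne_s _ _ this
  · rcases Nat.lt_or_ge m (p+1) with h2 | h2
    · have hP := walk_backward hw (fun a => ∃ k : Fin r, a = node c k ∧ k.val ≤ i)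
        (low_backward hw hi hmiss) p (by omega) ⟨⟨i, by omega⟩, hpa, le_refl i⟩ m h1 (by omega)
      obtain ⟨k, hk, -⟩ := hP
      have := (node_inj (hxm.symm.trans hk)).1
      simp at this
    · have hS := walk_forward hw (fun a => ∃ k : Fin r, a = node c k ∧ i < k.val)
        (high_closure hw hi hmiss) (p+1) m h2 hm ⟨⟨i+1, hi⟩, hpb, Nat.lt_succ_self i⟩
      rcases hS with ⟨k, hk, -⟩ | ht
      · have := (node_inj (hxm.symm.trans hk)).1
        simp at this
      · rw [hxm] at ht; exact node_ne_t _ _ ht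

lemma same_side (hw : IsWalkList w) (hlen : 0 < w.length) (h0 : w[0]'hlen = GapV.s)
    (hspan : ∀ a : GapV r, a ∈ w) {c : Bool} {i₁ i₂ : ℕ} (h12 : i₁ < i₂) (hi₂ : i₂ + 1 < r)
    (hmiss₁ : ¬ usesArc w (node c ⟨i₁+1, by omega⟩) (node c ⟨i₁, by omega⟩))
    (hmiss₂ : ¬ usesArc w (node c ⟨i₂+1, hi₂⟩) (node c ⟨i₂, by omega⟩)) : False := by
  have hi₁ : i₁ + 1 < r := by omega
  have hfwd := forward_unused hw hlen h0 hspan hi₁ hmiss₁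
  have hnever : ∀ m (hm : m < w.length),
      ¬ (∃ k : Fin r, w[m]'hm = node c k ∧ i₁ < k.val ∧ k.val ≤ i₂) := by
    refine walk_never hw (fun a => ∃ k : Fin r, a = node c k ∧ i₁ < k.val ∧ k.val ≤ i₂) hlen ?_ ?_
    · rw [h0]; rintro ⟨k, hk, -⟩; exact node_ne_s _ _ hk.symm
    · rintro n h hnP ⟨k, hk, hk1, hk2⟩
      have harc := step hw h
      rw [hk] at harc
      rcases arc_to_node harc with ⟨ha, hk0⟩ | ⟨j, ha, hadj⟩ | ⟨j, ha, hj0, hkr⟩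
      · omega
      · rcases hadj with h1 | h1
        · by_cases h2 : i₁ < j.val ∧ j.val ≤ i₂
          · exact hnP ⟨j, ha, h2.1, h2.2⟩
          · have hji : j = ⟨i₂+1, hi₂⟩ := Fin.ext (by simp; omega)
            have hki : k = (⟨i₂, by omega⟩ : Fin r) := Fin.ext (by simp; omega)
            exact hmiss₂ (mk_uses n h (by rw [ha, hji]) (by rw [hk, hki]))
        · by_cases h2 : i₁ < j.val ∧ j.val ≤ i₂
          · exact hnP ⟨j, ha, h2.1, h2.2⟩
          · have hji : j = (⟨i₁, by omega⟩ : Fin r) := Fin.ext (by simp; omega)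
            have hki : k = (⟨i₁+1, hi₁⟩ : Fin r) := Fin.ext (by simp; omega)
            exact hfwd (mk_uses n h (by rw [ha, hji]) (by rw [hk, hki]))
      · omega
  obtain ⟨m, hm, hxm⟩ := List.mem_iff_getElem.mp (hspan (node c ⟨i₁+1, hi₁⟩))
  exact hnever m hm ⟨⟨i₁+1, hi₁⟩, hxm, by simp, by simp; omega⟩

lemma mixed (hw : IsWalkList w) {c₁ c₂ : Bool} {i₁ i₂ : ℕ} (hc : c₁ ≠ c₂)
    (hi₁ : i₁ + 1 < r) (hi₂ : i₂ + 1 < r)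
    (hmiss₁ : ¬ usesArc w (node c₁ ⟨i₁+1, hi₁⟩) (node c₁ ⟨i₁, by omega⟩))
    {m₁ m₂ : ℕ} (hm₁ : m₁ < w.length) (hm₂ : m₂ < w.length) (hle : m₁ ≤ m₂)
    (hx₁ : w[m₁]'hm₁ = node c₁ ⟨i₁+1, hi₁⟩) (hx₂ : w[m₂]'hm₂ = node c₂ ⟨i₂+1, hi₂⟩) : False := by
  have hS := walk_forward hw (fun a => ∃ k : Fin r, a = node c₁ k ∧ i₁ < k.val)
    (high_closure hw hi₁ hmiss₁) m₁ m₂ hle hm₂ ⟨⟨i₁+1, hi₁⟩, hx₁, Nat.lt_succ_self i₁⟩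
  rcases hS with ⟨k, hk, -⟩ | ht
  · exact hc ((node_inj (hx₂.symm.trans hk)).1).symm
  · rw [hx₂] at ht; exact node_ne_t _ _ ht

lemma no_two (hw : IsWalkList w) (hlen : 0 < w.length) (h0 : w[0]'hlen = GapV.s)
    (hspan : ∀ a : GapV r, a ∈ w) {c₁ c₂ : Bool} {i₁ i₂ : ℕ}
    (hi₁ : i₁ + 1 < r) (hi₂ : i₂ + 1 < r) (hne : (c₁, i₁) ≠ (c₂, i₂))
    (hmiss₁ : ¬ usesArc w (node c₁ ⟨i₁+1, hi₁⟩) (node c₁ ⟨i₁, by omega⟩))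
    (hmiss₂ : ¬ usesArc w (node c₂ ⟨i₂+1, hi₂⟩) (node c₂ ⟨i₂, by omega⟩)) : False := by
  by_cases hc : c₁ = c₂
  · subst hc
    have hii : i₁ ≠ i₂ := by
      intro h; exact hne (by rw [h])
    rcases Nat.lt_or_ge i₁ i₂ with h | h
    · exact same_side hw hlen h0 hspan h hi₂ hmiss₁ hmiss₂
    · exact same_side hw hlen h0 hspan (by omega) hi₁ hmiss₂ hmiss₁
  · obtain ⟨m₁, hm₁, hx₁⟩ := List.mem_iff_getElem.mp (hspan (node c₁ ⟨i₁+1, hi₁⟩))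
    obtain ⟨m₂, hm₂, hx₂⟩ := List.mem_iff_getElem.mp (hspan (node c₂ ⟨i₂+1, hi₂⟩))
    rcases Nat.le_total m₁ m₂ with h | h
    · exact mixed hw hc hi₁ hi₂ hmiss₁ hm₁ hm₂ h hx₁ hx₂
    · exact mixed hw (Ne.symm hc) hi₂ hi₁ hmiss₂ hm₂ hm₁ h hx₂ hx₁

end Aux

theorem stmt12 (r : ℕ) (hr : 1 ≤ r) (w : List (GapV r))
    (hwalk : IsWalkList w)
    (hhead : w.head? = some GapV.s) (hlast : w.getLast? = some GapV.t)
    (hspan : ∀ a : GapV r, a ∈ w) :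
    (∃ (c₀ : Bool) (i₀ : ℕ), ∀ (c : Bool) (i : ℕ) (h : i + 1 < r),
        (c, i) ≠ (c₀, i₀) →
        usesArc w (node c ⟨i + 1, h⟩) (node c ⟨i, Nat.lt_of_succ_lt h⟩)) ∧
    2 * (r : ℝ) - 1 ≤ walkCost w := by
  classical
  have hlen : 0 < w.length :=
    List.length_pos_iff.mpr (List.ne_nil_of_mem (hspan GapV.s))
  have hne : w ≠ [] := List.length_pos_iff.mp hlen
  have h0 : w[0]'hlen = GapV.s := by
    rw [List.getElem_zero]
    rw [List.head?_eq_head hne] at hhead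
    simpa using hhead
  have hT : w[w.length - 1]'(by omega) = GapV.t := by
    rw [List.getLast?_eq_getLast hne] at hlast
    rw [← List.getLast_eq_getElem]
    simpa using hlast
  have part1 : ∃ (c₀ : Bool) (i₀ : ℕ), ∀ (c : Bool) (i : ℕ) (h : i + 1 < r),
      (c, i) ≠ (c₀, i₀) →
      usesArc w (node c ⟨i + 1, h⟩) (node c ⟨i, Nat.lt_of_succ_lt h⟩) := by
    by_cases hall : ∀ (c : Bool) (i : ℕ) (h : i + 1 < r),
        usesArc w (node c ⟨i+1, h⟩) (node c ⟨i, Nat.lt_of_succ_lt h⟩)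
    · exact ⟨true, 0, fun c i h _ => hall c i h⟩
    · push_neg at hall
      obtain ⟨c₀, i₀, hi₀, hm₀⟩ := hall
      refine ⟨c₀, i₀, fun c i h hne2 => ?_⟩
      by_contra hm
      exact Aux.no_two hwalk hlen h0 hspan h hi₀ hne2 hm hm₀
  obtain ⟨c₀, i₀, hpart⟩ := part1
  refine ⟨⟨c₀, i₀, hpart⟩, ?_⟩
  -- abbreviations via getD
  have h0D : w.getD 0 GapV.s = GapV.s := by
    rw [List.getD_eq_getElem _ _ hlen]; exact h0
  have hTD : w.getD (w.length - 1) GapV.s = GapV.t := by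
    rw [List.getD_eq_getElem _ _ (by omega)]; exact hT
  have hstepD : ∀ n, n + 1 < w.length →
      isArc (w.getD n GapV.s) (w.getD (n+1) GapV.s) = true := by
    intro n hn
    rw [List.getD_eq_getElem _ _ (by omega), List.getD_eq_getElem _ _ hn]
    exact Aux.step hwalk hn
  have hL3 : 3 ≤ w.length := by
    obtain ⟨m, hm, hxm⟩ := List.mem_iff_getElem.mp (hspan (GapV.u ⟨0, by omega⟩))
    have hm0 : m ≠ 0 := by
      intro h; subst h; rw [h0] at hxm; exact absurd hxm (by simp)
    have hmL : m ≠ w.length - 1 := by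
      intro h; subst h
      exact absurd (hT.symm.trans hxm) (by simp)
    omega
  have hcost : walkCost w = ∑ n ∈ Finset.range (w.length - 1),
      gapCost (w.getD n GapV.s) (w.getD (n+1) GapV.s) := by
    have hzlen : (w.zip w.tail).length = w.length - 1 := by
      rw [List.length_zip, List.length_tail]; omega
    calc walkCost w
        = ∑ i : Fin (w.zip w.tail).length,
            gapCost ((w.zip w.tail)[i.1]).1 ((w.zip w.tail)[i.1]).2 := by
          rw [walkCost]; exact (Fin.sum_univ_fun_getElem (w.zip w.tail) (fun p : GapV r × GapV r => gapCost p.1 p.2)).symm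
      _ = ∑ i : Fin (w.zip w.tail).length,
            gapCost (w.getD i.1 GapV.s) (w.getD (i.1+1) GapV.s) := by
          refine Finset.sum_congr rfl fun i _ => ?_
          have hi : i.1 < w.length - 1 := by have := i.isLt; omega
          simp only [List.getElem_zip, List.getElem_tail]
          rw [List.getD_eq_getElem _ _ (by omega : i.1 < w.length),
            List.getD_eq_getElem _ _ (by omega : i.1 + 1 < w.length)]
      _ = ∑ n ∈ Finset.range (w.zip w.tail).length,
            gapCost (w.getD n GapV.s) (w.getD (n+1) GapV.s) :=
          Fin.sum_univ_eq_sum_range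
            (fun n => gapCost (w.getD n GapV.s) (w.getD (n+1) GapV.s)) _
      _ = ∑ n ∈ Finset.range (w.length - 1),
            gapCost (w.getD n GapV.s) (w.getD (n+1) GapV.s) := by rw [hzlen]
  set D : Finset (Bool × ℕ) := (Finset.univ ×ˢ Finset.range (r-1)).erase (c₀, i₀) with hD
  have hmemD : ∀ q : Bool × ℕ, q ∈ D → q.2 + 1 < r ∧ (q.1, q.2) ≠ (c₀, i₀) := by
    intro q hq
    rw [hD, Finset.mem_erase, Finset.mem_product, Finset.mem_range] at hq
    exact ⟨by omega, by simpa using hq.1⟩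
  have hex : ∀ q : Bool × ℕ, ∃ n : ℕ, q ∈ D →
      n + 1 < w.length ∧ ∀ hq : q.2 + 1 < r,
        w.getD n GapV.s = node q.1 ⟨q.2+1, hq⟩ ∧
        w.getD (n+1) GapV.s = node q.1 ⟨q.2, by omega⟩ := by
    intro q
    by_cases hqD : q ∈ D
    · obtain ⟨hq1, hq2⟩ := hmemD q hqD
      obtain ⟨n, hn, ha, hb⟩ := Aux.uses_spec (hpart q.1 q.2 hq1 hq2)
      refine ⟨n, fun _ => ⟨hn, fun hq => ⟨?_, ?_⟩⟩⟩
      · rw [List.getD_eq_getElem _ _ (by omega)]; exact ha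
      · rw [List.getD_eq_getElem _ _ hn]; exact hb
    · exact ⟨0, fun h => absurd h hqD⟩
  choose g hg using hex
  set F : Finset ℕ := insert 0 (insert (w.length - 2) (D.image g)) with hF
  have hcostF : ∀ n ∈ F, n ∈ Finset.range (w.length - 1) ∧
      gapCost (w.getD n GapV.s) (w.getD (n+1) GapV.s) = 1 := by
    intro n hn
    rw [hF, Finset.mem_insert, Finset.mem_insert] at hn
    rcases hn with rfl | rfl | hn
    · refine ⟨Finset.mem_range.mpr (by omega), ?_⟩
      have harc := hstepD 0 (by omega)
      rw [h0D] at harc ⊢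
      exact Aux.cost_from_s harc
    · refine ⟨Finset.mem_range.mpr (by omega), ?_⟩
      have heq : w.length - 2 + 1 = w.length - 1 := by omega
      have harc := hstepD (w.length - 2) (by omega)
      rw [heq, hTD] at harc ⊢
      exact Aux.cost_to_t harc
    · obtain ⟨q, hqD, rfl⟩ := Finset.mem_image.mp hn
      obtain ⟨hq1, -⟩ := hmemD q hqD
      obtain ⟨hglt, hgspec⟩ := hg q hqD
      obtain ⟨ha, hb⟩ := hgspec hq1
      refine ⟨Finset.mem_range.mpr (by omega), ?_⟩
      rw [ha, hb]
      exact Aux.cost_back q.1 q.2 hq1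
  have hg0 : ∀ q ∈ D, g q ≠ 0 := by
    intro q hq hg0
    obtain ⟨hq1, -⟩ := hmemD q hq
    obtain ⟨-, hspec⟩ := hg q hq
    obtain ⟨ha, -⟩ := hspec hq1
    rw [hg0] at ha
    exact Aux.node_ne_s _ _ (ha.symm.trans h0D)
  have hgL : ∀ q ∈ D, g q ≠ w.length - 2 := by
    intro q hq hgL
    obtain ⟨hq1, -⟩ := hmemD q hq
    obtain ⟨-, hspec⟩ := hg q hq
    obtain ⟨-, hb⟩ := hspec hq1
    rw [hgL, (by omega : w.length - 2 + 1 = w.length - 1)] at hb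
    exact Aux.node_ne_t _ _ (hb.symm.trans hTD)
  have hinj : Set.InjOn g D := by
    intro q1 h1 q2 h2 he
    obtain ⟨h11, -⟩ := hmemD q1 h1
    obtain ⟨h21, -⟩ := hmemD q2 h2
    obtain ⟨-, hs1⟩ := hg q1 h1
    obtain ⟨-, hs2⟩ := hg q2 h2
    obtain ⟨ha1, -⟩ := hs1 h11
    obtain ⟨ha2, -⟩ := hs2 h21
    rw [he] at ha1
    obtain ⟨hc, hv⟩ := Aux.node_inj (ha1.symm.trans ha2)
    have hval : q1.2 = q2.2 := by
      have := congrArg Fin.val hv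
      simpa using this
    cases q1; cases q2
    simp_all
  have hcardF : D.card + 2 ≤ F.card := by
    have h1 : w.length - 2 ∉ D.image g := by
      rw [Finset.mem_image]
      rintro ⟨q, hq, hgq⟩
      exact hgL q hq hgq
    have h2 : (0 : ℕ) ∉ insert (w.length - 2) (D.image g) := by
      rw [Finset.mem_insert, Finset.mem_image]
      rintro (h | ⟨q, hq, hgq⟩)
      · omega
      · exact hg0 q hq hgq
    rw [hF, Finset.card_insert_of_notMem h2, Finset.card_insert_of_notMem h1,
      Finset.card_image_of_injOn hinj]
  have hDcard : 2 * (r-1) - 1 ≤ D.card := by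
    have := Finset.pred_card_le_card_erase
      (s := (Finset.univ : Finset Bool) ×ˢ Finset.range (r-1)) (a := (c₀, i₀))
    rw [hD]
    simpa [Finset.card_product, mul_comm] using this
  have hsum : (F.card : ℝ) ≤ walkCost w := by
    rw [hcost]
    calc (F.card : ℝ) = ∑ _n ∈ F, (1:ℝ) := by
          rw [Finset.sum_const, nsmul_eq_mul, mul_one]
      _ = ∑ n ∈ F, gapCost (w.getD n GapV.s) (w.getD (n+1) GapV.s) :=
          Finset.sum_congr rfl (fun n hn => ((hcostF n hn).2).symm)
      _ ≤ ∑ n ∈ Finset.range (w.length - 1),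
            gapCost (w.getD n GapV.s) (w.getD (n+1) GapV.s) :=
          Finset.sum_le_sum_of_subset_of_nonneg
            (fun n hn => (hcostF n hn).1)
            (fun n _ _ => Aux.cost_nonneg _ _)
  have hfin : 2 * r - 1 ≤ F.card := by omega
  have hcast : ((2 * r - 1 : ℕ) : ℝ) ≤ (F.card : ℝ) := Nat.cast_le.mpr hfin
  have h2r : ((2 * r - 1 : ℕ) : ℝ) = 2 * (r : ℝ) - 1 := by
    have : 1 ≤ 2 * r := by omega
    push_cast [this]
    ring
  linarith
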